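/- Suppose a ∈ Cl(V) satisfies a a̅ ∈ ℝ^× (a nonzero real scalar) and a x ã ∈ V for all x ∈ V. Then a is invertible and a x (â)⁻¹ ∈ V for all x ∈ V, i.e. a lies in the Lipschitz group Γ(V). -/

import Mathlib

open CliffordAlgebra

section SpanLemmas

variable {A : Type*} [Ring A] [Algebra ℝ A] {n : ℕ} (g : Fin n → A)

/-- products of strictly increasing lists of generators -/
def sortedSet : Set A :=
  {x | ∃ l : List (Fin n), l.Chain' (· < ·) ∧ (l.map g).prod = x}

lemma sortedSet_finite : (sortedSet g).Finite := by
  have h1 : sortedSet g ⊆ (fun l : List (Fin n) => (l.map g).prod) ''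
      {l : List (Fin n) | l.length ≤ n} := by
    rintro x ⟨l, hl, rfl⟩
    refine ⟨l, ?_, rfl⟩
    have hnd : l.Nodup := (List.isChain_iff_pairwise.mp hl).imp ne_of_lt
    simpa using hnd.length_le_card
  exact ((List.finite_length_le (Fin n) n).image _).subset h1

lemma one_mem_span_sortedSet : (1 : A) ∈ Submodule.span ℝ (sortedSet g) :=
  Submodule.subset_span ⟨[], List.isChain_nil, by simp⟩

lemma mul_span_mem {b : A} (hb : ∀ x ∈ sortedSet g, b * x ∈ Submodule.span ℝ (sortedSet g)) :
    ∀ x ∈ Submodule.span ℝ (sortedSet g), b * x ∈ Submodule.span ℝ (sortedSet g) := by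
  intro x hx
  induction hx using Submodule.span_induction with
  | mem x hx => exact hb x hx
  | zero => simpa using Submodule.zero_mem _
  | add x y _ _ hx hy => rw [mul_add]; exact add_mem hx hy
  | smul r x _ hx => rw [mul_smul_comm]; exact Submodule.smul_mem _ _ hx

variable (hsq : ∀ i, ∃ r : ℝ, g i * g i = algebraMap ℝ A r)
  (hswap : ∀ i j, ∃ r : ℝ, g i * g j + g j * g i = algebraMap ℝ A r)

include hsq hswap in
lemma inner_aux (j : Fin n)
    (H : ∀ i : Fin n, i < j → ∀ l : List (Fin n), l.Chain' (· < ·) →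
      g i * (l.map g).prod ∈ Submodule.span ℝ (sortedSet g)) :
    ∀ l : List (Fin n), l.Chain' (· < ·) →
      g j * (l.map g).prod ∈ Submodule.span ℝ (sortedSet g) := by
  intro l
  induction l with
  | nil => exact fun _ => Submodule.subset_span ⟨[j], List.isChain_singleton _, by simp⟩
  | cons i l' ih =>
    intro hl
    have hl' : l'.Chain' (· < ·) := hl.tail
    have hmem : (l'.map g).prod ∈ Submodule.span ℝ (sortedSet g) :=
      Submodule.subset_span ⟨l', hl', rfl⟩
    rw [List.map_cons, List.prod_cons, ← mul_assoc]
    rcases lt_trichotomy j i with hji | rfl | hij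
    · exact Submodule.subset_span
        ⟨j :: i :: l', List.isChain_cons_cons.mpr ⟨hji, hl⟩, by simp [mul_assoc]⟩
    · obtain ⟨r, hr⟩ := hsq j
      rw [hr, ← Algebra.smul_def]
      exact Submodule.smul_mem _ _ hmem
    · obtain ⟨r, hr⟩ := hswap i j
      have hgj : g j * g i = algebraMap ℝ A r - g i * g j := by
        rw [← hr, add_sub_cancel_left]
      rw [hgj, sub_mul]
      refine sub_mem ?_ ?_
      · rw [← Algebra.smul_def]
        exact Submodule.smul_mem _ _ hmem
      · rw [mul_assoc]
        exact mul_span_mem g (fun x hx => by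
          obtain ⟨t, ht, rfl⟩ := hx; exact H i hij t ht) _ (ih hl')

include hsq hswap in
lemma mul_sorted_mem : ∀ (j : Fin n) (l : List (Fin n)), l.Chain' (· < ·) →
    g j * (l.map g).prod ∈ Submodule.span ℝ (sortedSet g) := by
  have key : ∀ (N : ℕ) (j : Fin n), (j : ℕ) < N → ∀ l : List (Fin n), l.Chain' (· < ·) →
      g j * (l.map g).prod ∈ Submodule.span ℝ (sortedSet g) := by
    intro N
    induction N with
    | zero => exact fun j hj => absurd hj (Nat.not_lt_zero _)
    | succ N ihN =>
      intro j hj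
      exact inner_aux g hsq hswap j fun i hij l hl =>
        ihN i (lt_of_lt_of_le (Fin.lt_def.mp hij) (Nat.lt_succ_iff.mp hj)) l hl
  exact fun j l hl => key n j j.isLt l hl

include hsq hswap in
lemma span_mul_span_mem : ∀ x ∈ Submodule.span ℝ (sortedSet g),
    ∀ y ∈ Submodule.span ℝ (sortedSet g), x * y ∈ Submodule.span ℝ (sortedSet g) := by
  have hlist : ∀ (l : List (Fin n)), ∀ y ∈ Submodule.span ℝ (sortedSet g),
      (l.map g).prod * y ∈ Submodule.span ℝ (sortedSet g) := by
    intro l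
    induction l with
    | nil => intro y hy; simpa using hy
    | cons i l' ih =>
      intro y hy
      rw [List.map_cons, List.prod_cons, mul_assoc]
      exact mul_span_mem g (fun x hx => by
        obtain ⟨t, ht, rfl⟩ := hx; exact mul_sorted_mem g hsq hswap i t ht) _ (ih y hy)
  intro x hx y hy
  induction hx using Submodule.span_induction with
  | mem x hx => obtain ⟨l, hl, rfl⟩ := hx; exact hlist l y hy
  | zero => simpa using Submodule.zero_mem _
  | add x z _ _ hx hz => rw [add_mul]; exact add_mem hx hz
  | smul r x _ hx => rw [smul_mul_assoc]; exact Submodule.smul_mem _ _ hx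

include hsq hswap in
lemma adjoin_range_le_span : ∀ x ∈ Algebra.adjoin ℝ (Set.range g),
    x ∈ Submodule.span ℝ (sortedSet g) := by
  intro x hx
  induction hx using Algebra.adjoin_induction with
  | mem x hx =>
    obtain ⟨i, rfl⟩ := hx
    exact Submodule.subset_span ⟨[i], List.isChain_singleton _, by simp⟩
  | algebraMap r =>
    rw [Algebra.algebraMap_eq_smul_one]
    exact Submodule.smul_mem _ _ (one_mem_span_sortedSet g)
  | add x y _ _ hx hy => exact add_mem hx hy
  | mul x y _ _ hx hy => exact span_mul_span_mem g hsq hswap x hx y hy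

end SpanLemmas

/-- Dedekind-finiteness via a finite-dimensional multiplicatively closed submodule. -/
lemma mul_eq_one_symm_of_findim {A : Type*} [Ring A] [Algebra ℝ A]
    (M : Submodule ℝ A) (hfd : FiniteDimensional ℝ M)
    (hmul : ∀ x ∈ M, ∀ y ∈ M, x * y ∈ M) (h1 : (1 : A) ∈ M)
    {a u : A} (ha : a ∈ M) (hu : u ∈ M) (hau : a * u = 1) : u * a = 1 := by
  let L : M →ₗ[ℝ] M :=
    { toFun := fun z => ⟨a * z, hmul a ha z z.2⟩
      map_add' := fun x y => Subtype.ext (mul_add _ _ _)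
      map_smul' := fun r x => Subtype.ext (mul_smul_comm r a x) }
  have hsurj : Function.Surjective L := by
    intro z
    refine ⟨⟨u * z, hmul u hu z z.2⟩, Subtype.ext ?_⟩
    show a * (u * z) = z
    rw [← mul_assoc, hau, one_mul]
  have hinj : Function.Injective L := LinearMap.injective_iff_surjective.mpr hsurj
  have : L ⟨u * a, hmul u hu a ha⟩ = L ⟨1, h1⟩ := by
    refine Subtype.ext ?_
    show a * (u * a) = a * 1
    rw [← mul_assoc, hau, one_mul, mul_one]
  simpa using congrArg Subtype.val (hinj this)

section Clifford

variable {V : Type*} [AddCommGroup V] [Module ℝ V] {Q' : QuadraticForm ℝ V}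

lemma exists_finset_adjoin (x : CliffordAlgebra Q') :
    ∃ s : Finset V, x ∈ Algebra.adjoin ℝ (⇑(ι Q') '' ↑s) := by
  classical
  induction x using CliffordAlgebra.induction with
  | algebraMap r => exact ⟨∅, Subalgebra.algebraMap_mem _ r⟩
  | ι m => exact ⟨{m}, Algebra.subset_adjoin ⟨m, by simp, rfl⟩⟩
  | mul x y hx hy =>
    obtain ⟨s, hs⟩ := hx
    obtain ⟨t, ht⟩ := hy
    refine ⟨s ∪ t, mul_mem ?_ ?_⟩
    · exact Algebra.adjoin_mono (Set.image_mono (by simp)) hs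
    · exact Algebra.adjoin_mono (Set.image_mono (by simp)) ht
  | add x y hx hy =>
    obtain ⟨s, hs⟩ := hx
    obtain ⟨t, ht⟩ := hy
    refine ⟨s ∪ t, add_mem ?_ ?_⟩
    · exact Algebra.adjoin_mono (Set.image_mono (by simp)) hs
    · exact Algebra.adjoin_mono (Set.image_mono (by simp)) ht

lemma reverse_mem_adjoin {s : Finset V} {x : CliffordAlgebra Q'}
    (hx : x ∈ Algebra.adjoin ℝ (⇑(ι Q') '' ↑s)) :
    reverse x ∈ Algebra.adjoin ℝ (⇑(ι Q') '' ↑s) := by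
  induction hx using Algebra.adjoin_induction with
  | mem x hx =>
    obtain ⟨m, hm, rfl⟩ := hx
    rw [reverse_ι]
    exact Algebra.subset_adjoin ⟨m, hm, rfl⟩
  | algebraMap r => rw [reverse.commutes]; exact Subalgebra.algebraMap_mem _ r
  | add x y _ _ hx hy => rw [map_add]; exact add_mem hx hy
  | mul x y _ _ hx hy => rw [reverse.map_mul]; exact mul_mem hy hx

lemma involute_mem_adjoin {s : Finset V} {x : CliffordAlgebra Q'}
    (hx : x ∈ Algebra.adjoin ℝ (⇑(ι Q') '' ↑s)) :
    involute x ∈ Algebra.adjoin ℝ (⇑(ι Q') '' ↑s) := by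
  induction hx using Algebra.adjoin_induction with
  | mem x hx =>
    obtain ⟨m, hm, rfl⟩ := hx
    rw [involute_ι]
    exact neg_mem (Algebra.subset_adjoin ⟨m, hm, rfl⟩)
  | algebraMap r => rw [involute.commutes]; exact Subalgebra.algebraMap_mem _ r
  | add x y _ _ hx hy => rw [map_add]; exact add_mem hx hy
  | mul x y _ _ hx hy => rw [map_mul]; exact mul_mem hx hy

lemma image_finset_eq_range (s : Finset V) :
    ⇑(ι Q') '' ↑s =
      Set.range (fun i : Fin s.card => ι Q' ((s.equivFin.symm i : V))) := by
  have hrange : Set.range (fun i : Fin s.card => ((s.equivFin.symm i : V))) = ↑s := by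
    ext x
    constructor
    · rintro ⟨i, rfl⟩; exact (s.equivFin.symm i).2
    · intro hx
      exact ⟨s.equivFin ⟨x, hx⟩, by simp⟩
  rw [← hrange, ← Set.range_comp]
  rfl

/-- Dedekind finiteness in a Clifford algebra over `ℝ`. -/
lemma clifford_mul_eq_one_symm {a u : CliffordAlgebra Q'} (hau : a * u = 1) : u * a = 1 := by
  obtain ⟨s, ha⟩ := exists_finset_adjoin a
  obtain ⟨t, hu⟩ := exists_finset_adjoin u
  classical
  have ha' : a ∈ Algebra.adjoin ℝ (⇑(ι Q') '' ↑(s ∪ t)) :=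
    Algebra.adjoin_mono (Set.image_mono (by simp)) ha
  have hu' : u ∈ Algebra.adjoin ℝ (⇑(ι Q') '' ↑(s ∪ t)) :=
    Algebra.adjoin_mono (Set.image_mono (by simp)) hu
  set st := s ∪ t with hst
  set g : Fin st.card → CliffordAlgebra Q' :=
    fun i => ι Q' ((st.equivFin.symm i : V)) with hg
  have himg : ⇑(ι Q') '' ↑st = Set.range g := image_finset_eq_range st
  rw [himg] at ha' hu'
  have hsq : ∀ i, ∃ r : ℝ, g i * g i = algebraMap ℝ _ r :=
    fun i => ⟨_, ι_sq_scalar Q' _⟩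
  have hswap : ∀ i j, ∃ r : ℝ, g i * g j + g j * g i = algebraMap ℝ _ r :=
    fun i j => ⟨_, ι_mul_ι_add_swap _ _⟩
  have haM := adjoin_range_le_span g hsq hswap a ha'
  have huM := adjoin_range_le_span g hsq hswap u hu'
  exact mul_eq_one_symm_of_findim (Submodule.span ℝ (sortedSet g))
    (FiniteDimensional.span_of_finite ℝ (sortedSet_finite g))
    (span_mul_span_mem g hsq hswap) (one_mem_span_sortedSet g) haM huM hau

end Clifford

/-- If `a ∈ Cl(V)` (convention `v² = -Q v`, `Q` non-degenerate)
satisfies `a a̅ ∈ ℝˣ` and `a x ã ∈ V` for all `x ∈ V`, then `a` is invertible and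
`a x (â)⁻¹ ∈ V` for all `x ∈ V`, i.e. `a` lies in the Lipschitz group `Γ(V)`. -/
theorem mem_lipschitz_of_conj_conditions (V : Type*) [AddCommGroup V] [Module ℝ V]
    (Q : QuadraticForm ℝ V)
    (hQnd : ∀ w : V, (∀ u : V, QuadraticMap.polar Q w u = 0) → w = 0)
    (a : CliffordAlgebra (-Q))
    (h1 : ∃ r : ℝ, r ≠ 0 ∧ a * reverse (involute a) = algebraMap ℝ _ r)
    (h2 : ∀ x : V, ∃ y : V, a * ι (-Q) x * reverse a = ι (-Q) y) :
    IsUnit a ∧ ∀ x : V, ∃ y : V, a * ι (-Q) x * Ring.inverse (involute a) = ι (-Q) y := by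
  obtain ⟨r, hr0, hr⟩ := h1
  set u : CliffordAlgebra (-Q) := r⁻¹ • reverse (involute a) with hu
  have hau : a * u = 1 := by
    rw [hu, mul_smul_comm, hr, Algebra.algebraMap_eq_smul_one, smul_smul,
      inv_mul_cancel₀ hr0, one_smul]
  have hua : u * a = 1 := clifford_mul_eq_one_symm hau
  have hunit : IsUnit a := ⟨⟨a, u, hau, hua⟩, rfl⟩
  refine ⟨hunit, fun x => ?_⟩
  obtain ⟨y, hy⟩ := h2 x
  let w : (CliffordAlgebra (-Q))ˣ :=
    ⟨involute a, involute u, by rw [← map_mul, hau, map_one], by rw [← map_mul, hua, map_one]⟩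
  have hinv : Ring.inverse (involute a) = involute u := Ring.inverse_unit w
  have hiu : involute u = r⁻¹ • reverse a := by
    rw [hu, map_smul, reverse_involute, involute_involute]
  refine ⟨r⁻¹ • y, ?_⟩
  rw [hinv, hiu, mul_smul_comm, hy, map_smul]
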